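/- arXiv:2208.14343 — 2 statements merged into one kernel-verified Lean document; each statement's English description precedes it below -/
import Mathlib

section
/- For fixed v ∈ ℝ³, I > 0, r, R ∈ (0,1), σ ∈ S², the map h : (v*, I*) ↦ (x, y) with x = (v+v*)/2 - √(R(¼|v-v*|² + I + I*)) σ and y = (1-R)(1-r)(¼|v-v*|² + I + I*) is injective on ℝ³ × ℝ₊, with inverse given by v* = 2x + 2√(Ray) σ - v and I* = ay - I - |x - v + √(Ray) σ|², where a = 1/((1-r)(1-R)), defined on the set {(x,y) : ay - I - |x - v + √(Ray)σ|² > 0}. -/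
theorem stmt11 (v : EuclideanSpace ℝ (Fin 3)) (I : ℝ) (hI : 0 < I)
    (r R : ℝ) (hr : r ∈ Set.Ioo (0:ℝ) 1) (hR : R ∈ Set.Ioo (0:ℝ) 1)
    (σ : EuclideanSpace ℝ (Fin 3)) (hσ : ‖σ‖ = 1)
    (a : ℝ) (ha : a = ((1 - r) * (1 - R))⁻¹)
    (h : EuclideanSpace ℝ (Fin 3) × ℝ → EuclideanSpace ℝ (Fin 3) × ℝ)
    (hh : ∀ p : EuclideanSpace ℝ (Fin 3) × ℝ,
      h p = ((1/2:ℝ) • (v + p.1) -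
               Real.sqrt (R * ((1/4) * ‖v - p.1‖^2 + I + p.2)) • σ,
             (1 - R) * (1 - r) * ((1/4) * ‖v - p.1‖^2 + I + p.2))) :
    Set.InjOn h {p | 0 < p.2} ∧
    ∀ p : EuclideanSpace ℝ (Fin 3) × ℝ, 0 < p.2 →
      p.1 = (2:ℝ) • (h p).1 + (2 * Real.sqrt (R * a * (h p).2)) • σ - v ∧
      p.2 = a * (h p).2 - I - ‖(h p).1 - v + Real.sqrt (R * a * (h p).2) • σ‖^2 ∧
      0 < a * (h p).2 - I - ‖(h p).1 - v + Real.sqrt (R * a * (h p).2) • σ‖^2 := by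
  have hr1 : (0:ℝ) < 1 - r := by linarith [hr.2]
  have hR1 : (0:ℝ) < 1 - R := by linarith [hR.2]
  have key : ∀ p : EuclideanSpace ℝ (Fin 3) × ℝ, 0 < p.2 →
      p.1 = (2:ℝ) • (h p).1 + (2 * Real.sqrt (R * a * (h p).2)) • σ - v ∧
      p.2 = a * (h p).2 - I - ‖(h p).1 - v + Real.sqrt (R * a * (h p).2) • σ‖^2 ∧
      0 < a * (h p).2 - I - ‖(h p).1 - v + Real.sqrt (R * a * (h p).2) • σ‖^2 := by
    intro p hp
    set E : ℝ := (1/4) * ‖v - p.1‖^2 + I + p.2 with hE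
    have haE : a * (h p).2 = E := by
      rw [hh, ha]
      show ((1 - r) * (1 - R))⁻¹ * ((1 - R) * (1 - r) * E) = E
      field_simp
    have hRE : R * a * (h p).2 = R * E := by rw [mul_assoc, haE]
    have h1 : (h p).1 = (1/2:ℝ) • (v + p.1) - Real.sqrt (R * E) • σ := by
      rw [hh]
    have hfst : p.1 = (2:ℝ) • (h p).1 + (2 * Real.sqrt (R * a * (h p).2)) • σ - v := by
      rw [hRE, h1]
      simp only [smul_sub, smul_smul]
      module
    have hmid : (h p).1 - v + Real.sqrt (R * a * (h p).2) • σ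
        = (1/2:ℝ) • (p.1 - v) := by
      rw [hRE, h1]
      module
    have hnorm : ‖(h p).1 - v + Real.sqrt (R * a * (h p).2) • σ‖^2
        = (1/4) * ‖v - p.1‖^2 := by
      rw [hmid, norm_smul, ← norm_neg (p.1 - v)]
      simp only [neg_sub]
      rw [mul_pow]
      norm_num
    have hsnd : p.2 = a * (h p).2 - I - ‖(h p).1 - v + Real.sqrt (R * a * (h p).2) • σ‖^2 := by
      rw [haE, hnorm, hE]; ring
    exact ⟨hfst, hsnd, hsnd ▸ hp⟩
  refine ⟨?_, key⟩
  intro p hp q hq heq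
  obtain ⟨hp1, hp2, -⟩ := key p hp
  obtain ⟨hq1, hq2, -⟩ := key q hq
  rw [heq] at hp1 hp2
  exact Prod.ext (hp1.trans hq1.symm) (hp2.trans hq2.symm)
end

section
/- Let γ ≥ 0. There exists c > 0 such that for all v ∈ ℝ³ and I ≥ 0: I^{γ/2} + ∫_{ℝ³} | |v| - |v*| |^γ e^{-½|v*|²} dv* ≥ c (|v|^γ + I^{γ/2} + 1). -/
open MeasureTheory Metric

private lemma gauss_integrable :
    Integrable (fun v : EuclideanSpace ℝ (Fin 3) => Real.exp (-(1/4:ℝ) * ‖v‖^2)) := by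
  have h := (GaussianFourier.integrable_cexp_neg_mul_sq_norm_add (V := EuclideanSpace ℝ (Fin 3))
    (b := (1/4:ℂ)) (by norm_num) 0 0).norm
  convert h using 2 with v
  simp [Complex.norm_exp, ← Complex.ofReal_pow]

private lemma aux_integrable (γ : ℝ) (hγ : 0 ≤ γ) (v : EuclideanSpace ℝ (Fin 3)) :
    Integrable (fun vs : EuclideanSpace ℝ (Fin 3) =>
      |‖v‖ - ‖vs‖| ^ γ * Real.exp (-(1/2) * ‖vs‖^2)) := by
  have hcont : Continuous fun vs : EuclideanSpace ℝ (Fin 3) =>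
      |‖v‖ - ‖vs‖| ^ γ * Real.exp (-(1/2) * ‖vs‖^2) := by
    have hpow : Continuous fun t : ℝ => t ^ γ := by
      rw [continuous_iff_continuousAt]
      exact fun x => Real.continuousAt_rpow_const x γ (Or.inr hγ)
    exact (hpow.comp ((continuous_const.sub continuous_norm).abs)).mul
      (Real.continuous_exp.comp (by continuity))
  refine Integrable.mono'
    (gauss_integrable.const_mul ((2*‖v‖)^γ + 2^γ * Real.exp (γ^2)))
    hcont.aestronglyMeasurable ?_
  filter_upwards with vs
  set a := ‖v‖ with ha
  set r := ‖vs‖ with hr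
  have h0a : (0:ℝ) ≤ a := norm_nonneg _
  have h0r : (0:ℝ) ≤ r := norm_nonneg _
  rw [Real.norm_eq_abs, abs_of_nonneg (by positivity)]
  have h1 : |a - r| ^ γ ≤ (a + r) ^ γ := by
    apply Real.rpow_le_rpow (abs_nonneg _) _ hγ
    rw [abs_sub_le_iff]; constructor <;> linarith
  have h2 : (a + r) ^ γ ≤ (2*a) ^ γ + (2*r) ^ γ := by
    rcases le_total a r with h | h
    · have : (a + r) ^ γ ≤ (2*r) ^ γ :=
        Real.rpow_le_rpow (by linarith) (by linarith) hγ
      have h2a : (0:ℝ) ≤ (2*a) ^ γ := Real.rpow_nonneg (by linarith) _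
      linarith
    · have : (a + r) ^ γ ≤ (2*a) ^ γ :=
        Real.rpow_le_rpow (by linarith) (by linarith) hγ
      have h2r : (0:ℝ) ≤ (2*r) ^ γ := Real.rpow_nonneg (by linarith) _
      linarith
  have h3 : (2*r) ^ γ * Real.exp (-(1/4) * r^2) ≤ 2 ^ γ * Real.exp (γ^2) := by
    have hmr : (2*r) ^ γ = 2 ^ γ * r ^ γ := Real.mul_rpow (by norm_num) h0r
    have hrg : r ^ γ ≤ Real.exp (r * γ) := by
      calc r ^ γ ≤ (Real.exp r) ^ γ :=
            Real.rpow_le_rpow h0r (by linarith [Real.add_one_le_exp r]) hγ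
        _ = Real.exp (r * γ) := (Real.exp_mul r γ).symm
    have h2γ : (0:ℝ) ≤ (2:ℝ) ^ γ := Real.rpow_nonneg (by norm_num) _
    calc (2*r) ^ γ * Real.exp (-(1/4) * r^2)
        = 2 ^ γ * (r ^ γ * Real.exp (-(1/4) * r^2)) := by rw [hmr]; ring
      _ ≤ 2 ^ γ * (Real.exp (r * γ) * Real.exp (-(1/4) * r^2)) := by
          apply mul_le_mul_of_nonneg_left _ h2γ
          exact mul_le_mul_of_nonneg_right hrg (Real.exp_pos _).le
      _ = 2 ^ γ * Real.exp (r * γ + -(1/4) * r^2) := by rw [Real.exp_add]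
      _ ≤ 2 ^ γ * Real.exp (γ^2) := by
          apply mul_le_mul_of_nonneg_left _ h2γ
          exact Real.exp_le_exp.2 (by nlinarith [sq_nonneg (γ - r/2)])
  have e2 : Real.exp (-(1/2) * r^2) =
      Real.exp (-(1/4) * r^2) * Real.exp (-(1/4) * r^2) := by
    rw [← Real.exp_add]; ring_nf
  have h2a : (0:ℝ) ≤ (2*a) ^ γ := Real.rpow_nonneg (by linarith) _
  calc |a - r| ^ γ * Real.exp (-(1/2) * r^2)
      ≤ ((2*a) ^ γ + (2*r) ^ γ) * Real.exp (-(1/2) * r^2) :=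
        mul_le_mul_of_nonneg_right (h1.trans h2) (Real.exp_pos _).le
    _ = (2*a) ^ γ * Real.exp (-(1/2) * r^2)
        + ((2*r) ^ γ * Real.exp (-(1/4) * r^2)) * Real.exp (-(1/4) * r^2) := by
        rw [e2]; ring
    _ ≤ (2*a) ^ γ * Real.exp (-(1/4) * r^2)
        + (2 ^ γ * Real.exp (γ^2)) * Real.exp (-(1/4) * r^2) :=
        add_le_add
          (mul_le_mul_of_nonneg_left (Real.exp_le_exp.2 (by nlinarith [sq_nonneg r])) h2a)
          (mul_le_mul_of_nonneg_right h3 (Real.exp_pos _).le)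
    _ = ((2*a) ^ γ + 2 ^ γ * Real.exp (γ^2)) * Real.exp (-(1/4) * r^2) := by ring

theorem stmt15 (γ : ℝ) (hγ : 0 ≤ γ) :
    ∃ c : ℝ, 0 < c ∧
      ∀ (v : EuclideanSpace ℝ (Fin 3)) (I : ℝ), 0 ≤ I →
        c * (‖v‖ ^ γ + I ^ (γ / 2) + 1) ≤
          I ^ (γ / 2) +
            ∫ vs : EuclideanSpace ℝ (Fin 3),
              |‖v‖ - ‖vs‖| ^ γ * Real.exp (-(1/2) * ‖vs‖^2) := by
  set S1 : Set (EuclideanSpace ℝ (Fin 3)) := closedBall 0 (1/2) with hS1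
  set S2 : Set (EuclideanSpace ℝ (Fin 3)) := closedBall 0 3 \ ball 0 2 with hS2
  have hS1meas : MeasurableSet S1 := measurableSet_closedBall
  have hS2meas : MeasurableSet S2 := measurableSet_closedBall.diff measurableSet_ball
  have hS1fin : volume S1 ≠ ⊤ := measure_closedBall_lt_top.ne
  have hS2fin : volume S2 ≠ ⊤ :=
    ((measure_mono Set.diff_subset).trans_lt measure_closedBall_lt_top).ne
  have hS1pos : 0 < (volume S1).toReal :=
    ENNReal.toReal_pos (measure_closedBall_pos _ _ (by norm_num)).ne' hS1fin
  have hS2pos : 0 < (volume S2).toReal := by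
    refine ENNReal.toReal_pos ?_ hS2fin
    set x : EuclideanSpace ℝ (Fin 3) := EuclideanSpace.single 0 (5/2 : ℝ) with hx
    have hxn : ‖x‖ = 5/2 := by
      rw [hx, EuclideanSpace.norm_single]; norm_num
    have hsub : ball x (1/2) ⊆ S2 := by
      intro y hy
      rw [mem_ball] at hy
      have hd : ‖y - x‖ < 1/2 := by rwa [← dist_eq_norm]
      constructor
      · rw [mem_closedBall_zero_iff]
        have hxy : x + (y - x) = y := by abel
        calc ‖y‖ = ‖x + (y - x)‖ := by rw [hxy]
          _ ≤ ‖x‖ + ‖y - x‖ := norm_add_le _ _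
          _ ≤ 3 := by rw [hxn]; linarith
      · intro hmem
        rw [mem_ball_zero_iff] at hmem
        have hxy : y - (y - x) = x := by abel
        have : ‖x‖ ≤ ‖y‖ + ‖y - x‖ := by
          calc ‖x‖ = ‖y - (y - x)‖ := by rw [hxy]
            _ ≤ ‖y‖ + ‖y - x‖ := norm_sub_le _ _
        rw [hxn] at this; linarith
    exact ((measure_ball_pos volume x (by norm_num)).trans_le (measure_mono hsub)).ne'
  set c1 : ℝ := Real.exp (-(1/8:ℝ)) * (volume S1).toReal with hc1
  set c2 : ℝ := Real.exp (-(9/2:ℝ)) * (volume S2).toReal with hc2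
  have hc1pos : 0 < c1 := mul_pos (Real.exp_pos _) hS1pos
  have hc2pos : 0 < c2 := mul_pos (Real.exp_pos _) hS2pos
  have hhalf : (0:ℝ) < (1/2:ℝ) ^ γ := Real.rpow_pos_of_pos (by norm_num) _
  refine ⟨min 1 (min ((1/2:ℝ) ^ γ * c1 / 2) (c2 / 2)), ?_, ?_⟩
  · apply lt_min one_pos (lt_min (by positivity) (by positivity))
  intro v I hI
  set c := min 1 (min ((1/2:ℝ) ^ γ * c1 / 2) (c2 / 2)) with hc
  have hcpos : 0 < c := lt_min one_pos (lt_min (by positivity) (by positivity))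
  have hc1' : c ≤ (1/2:ℝ) ^ γ * c1 / 2 := (min_le_right _ _).trans (min_le_left _ _)
  have hc2' : c ≤ c2 / 2 := (min_le_right _ _).trans (min_le_right _ _)
  have hcle1 : c ≤ 1 := min_le_left _ _
  have hIr : 0 ≤ I ^ (γ / 2) := Real.rpow_nonneg hI _
  have hint := aux_integrable γ hγ v
  have hnonneg : ∀ vs : EuclideanSpace ℝ (Fin 3),
      0 ≤ |‖v‖ - ‖vs‖| ^ γ * Real.exp (-(1/2) * ‖vs‖^2) := fun vs => by positivity
  set F := ∫ vs : EuclideanSpace ℝ (Fin 3),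
      |‖v‖ - ‖vs‖| ^ γ * Real.exp (-(1/2) * ‖vs‖^2) with hF
  have key : c * (‖v‖ ^ γ + 1) ≤ F := by
    rcases le_total 1 ‖v‖ with h1v | h1v
    · -- large velocity: use S1
      have hbound : ∀ vs ∈ S1, (‖v‖/2) ^ γ * Real.exp (-(1/8:ℝ)) ≤
          |‖v‖ - ‖vs‖| ^ γ * Real.exp (-(1/2) * ‖vs‖^2) := by
        intro vs hvs
        rw [hS1, mem_closedBall_zero_iff] at hvs
        have h0vs : (0:ℝ) ≤ ‖vs‖ := norm_nonneg _
        have hr1 : (‖v‖/2) ^ γ ≤ |‖v‖ - ‖vs‖| ^ γ := by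
          apply Real.rpow_le_rpow (by linarith) _ hγ
          rw [le_abs]
          left; linarith
        have hr2 : Real.exp (-(1/8:ℝ)) ≤ Real.exp (-(1/2) * ‖vs‖^2) := by
          apply Real.exp_le_exp.2
          nlinarith
        exact mul_le_mul hr1 hr2 (Real.exp_pos _).le (Real.rpow_nonneg (abs_nonneg _) _)
      have hset : ((‖v‖/2) ^ γ * Real.exp (-(1/8:ℝ))) * (volume S1).toReal ≤
          ∫ vs in S1, |‖v‖ - ‖vs‖| ^ γ * Real.exp (-(1/2) * ‖vs‖^2) :=
        setIntegral_ge_of_const_le_real hS1meas hS1fin hbound hint.integrableOn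
      have hle : (∫ vs in S1, |‖v‖ - ‖vs‖| ^ γ * Real.exp (-(1/2) * ‖vs‖^2)) ≤ F :=
        setIntegral_le_integral hint (Filter.Eventually.of_forall hnonneg)
      have hmul : (‖v‖/2) ^ γ = ‖v‖ ^ γ * (1/2:ℝ) ^ γ := by
        rw [div_eq_mul_inv, Real.mul_rpow (norm_nonneg _) (by norm_num)]
        norm_num
      have hvγ : (1:ℝ) ≤ ‖v‖ ^ γ := by
        calc (1:ℝ) = 1 ^ γ := (Real.one_rpow γ).symm
          _ ≤ ‖v‖ ^ γ := Real.rpow_le_rpow (by norm_num) h1v hγ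
      have hFge : ‖v‖ ^ γ * ((1/2:ℝ) ^ γ * c1) ≤ F := by
        calc ‖v‖ ^ γ * ((1/2:ℝ) ^ γ * c1)
            = ((‖v‖/2) ^ γ * Real.exp (-(1/8:ℝ))) * (volume S1).toReal := by
              rw [hmul, hc1]; ring
          _ ≤ F := hset.trans hle
      nlinarith [mul_le_mul_of_nonneg_right hc1' (by linarith : (0:ℝ) ≤ ‖v‖ ^ γ)]
    · -- small velocity: use S2
      have hbound : ∀ vs ∈ S2, Real.exp (-(9/2:ℝ)) ≤
          |‖v‖ - ‖vs‖| ^ γ * Real.exp (-(1/2) * ‖vs‖^2) := by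
        intro vs hvs
        rw [hS2] at hvs
        obtain ⟨hvs3, hvs2⟩ := hvs
        rw [mem_closedBall_zero_iff] at hvs3
        rw [mem_ball_zero_iff, not_lt] at hvs2
        have hr1 : (1:ℝ) ≤ |‖v‖ - ‖vs‖| ^ γ := by
          calc (1:ℝ) = 1 ^ γ := (Real.one_rpow γ).symm
            _ ≤ |‖v‖ - ‖vs‖| ^ γ := by
              apply Real.rpow_le_rpow (by norm_num) _ hγ
              rw [le_abs]; right; linarith
        have hr2 : Real.exp (-(9/2:ℝ)) ≤ Real.exp (-(1/2) * ‖vs‖^2) := by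
          apply Real.exp_le_exp.2
          nlinarith [norm_nonneg vs]
        calc Real.exp (-(9/2:ℝ)) = 1 * Real.exp (-(9/2:ℝ)) := (one_mul _).symm
          _ ≤ |‖v‖ - ‖vs‖| ^ γ * Real.exp (-(1/2) * ‖vs‖^2) :=
            mul_le_mul hr1 hr2 (Real.exp_pos _).le (by positivity)
      have hset : Real.exp (-(9/2:ℝ)) * (volume S2).toReal ≤
          ∫ vs in S2, |‖v‖ - ‖vs‖| ^ γ * Real.exp (-(1/2) * ‖vs‖^2) :=
        setIntegral_ge_of_const_le_real hS2meas hS2fin hbound hint.integrableOn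
      have hle : (∫ vs in S2, |‖v‖ - ‖vs‖| ^ γ * Real.exp (-(1/2) * ‖vs‖^2)) ≤ F :=
        setIntegral_le_integral hint (Filter.Eventually.of_forall hnonneg)
      have hFge : c2 ≤ F := by rw [hc2]; exact hset.trans hle
      have hvγ : ‖v‖ ^ γ ≤ 1 := Real.rpow_le_one (norm_nonneg _) h1v hγ
      nlinarith
  have hvγ0 : (0:ℝ) ≤ ‖v‖ ^ γ := Real.rpow_nonneg (norm_nonneg _) _
  nlinarith [mul_le_mul_of_nonneg_right hcle1 hIr]
end
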